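/- Let $X$ be a separable Hilbert space with probability measure $\nu$ satisfying Hypothesis 1, let $p > 1$, $s \in (1,p)$, and let $\varphi \in W^{1,p}(X,\nu)$ with $\varphi \geq 0$ $\nu$-a.e. Then $\varphi^s \in W^{1,p/s}(X,\nu)$ and $\|\varphi^s\|_{W^{1,p/s}(X,\nu)} \leq \|\varphi\|_{L^p(X,\nu)}^s + s\, \|M_p\varphi\|_{L^p(X,\nu;X)}\, \|\varphi\|_{L^p(X,\nu)}^{s-1}$. -/

import Mathlib

open MeasureTheory Filter
open scoped ENNReal Topology RealInnerProductSpace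

open InnerProductSpace
open scoped NNReal

noncomputable section

section aux

def pw (r t : ℝ) : ℝ := (max t 0) ^ r
lemma pw_nonneg (r t : ℝ) : 0 ≤ pw r t := Real.rpow_nonneg (le_max_right _ _) _






lemma continuous_pw (r : ℝ) (hr : 0 ≤ r) : Continuous (pw r) :=
  (Real.continuous_rpow_const hr).comp (continuous_id.max continuous_const)

lemma pw_le {r t C : ℝ} (hr : 0 ≤ r) (h : |t| ≤ C) : pw r t ≤ C ^ r := by
  refine Real.rpow_le_rpow (le_max_right _ _) ?_ hr
  have := abs_nonneg t
  rcases le_total t 0 with h' | h' <;> simp [max_eq_left, max_eq_right, h'] <;> nlinarith [abs_le.1 h]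

lemma rpow_sub_rpow_le {x y r : ℝ} (hy : 0 ≤ y) (hxy : y ≤ x) (hr : 1 ≤ r) :
    x ^ r - y ^ r ≤ r * x ^ (r - 1) * (x - y) := by
  have hx : 0 ≤ x := hy.trans hxy
  rcases eq_or_lt_of_le hx with h0 | hx0
  · have : y = 0 := le_antisymm (by linarith) hy
    simp [← h0, this]
  have hb := one_add_mul_self_le_rpow_one_add (s := y / x - 1) (by
    have : 0 ≤ y / x := div_nonneg hy hx0.le
    linarith) hr
  have hyx1 : 1 + (y / x - 1) = y / x := by ring
  rw [hyx1, Real.div_rpow hy hx0.le] at hb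
  have hxr : 0 < x ^ r := Real.rpow_pos_of_pos hx0 r
  have hkey : x ^ r * (1 + r * (y / x - 1)) ≤ y ^ r := by
    calc x ^ r * (1 + r * (y / x - 1)) ≤ x ^ r * (y ^ r / x ^ r) := by
          exact mul_le_mul_of_nonneg_left hb hxr.le
      _ = y ^ r := by field_simp
  have hx1 : x ^ (r - 1) * x = x ^ r := by
    rw [← Real.rpow_add_one (ne_of_gt hx0)]; ring_nf
  have hdiv : x ^ r * (y / x) = x ^ (r - 1) * y := by
    rw [← hx1]; field_simp
  nlinarith [hkey]




lemma posPart_sub_le (a b : ℝ) : max a 0 - max b 0 ≤ |a - b| :=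
  (le_abs_self _).trans (abs_max_sub_max_le_abs a b 0)

lemma pw_sub_le_one_side {r : ℝ} (hr : 1 ≤ r) (a b : ℝ) :
    pw r a - pw r b ≤ r * (|a| + |b|) ^ (r - 1) * |a - b| := by
  rcases le_total (max a 0) (max b 0) with h | h
  · have h1 : pw r a ≤ pw r b := Real.rpow_le_rpow (le_max_right _ _) h (by linarith)
    have h2 : (0:ℝ) ≤ r * (|a| + |b|) ^ (r - 1) * |a - b| := by
      apply mul_nonneg (mul_nonneg (by linarith) (Real.rpow_nonneg (by positivity) _)) (abs_nonneg _)
    linarith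
  · calc pw r a - pw r b ≤ r * (max a 0) ^ (r - 1) * (max a 0 - max b 0) :=
          rpow_sub_rpow_le (le_max_right _ _) h hr
      _ ≤ r * (|a| + |b|) ^ (r - 1) * |a - b| := by
          apply mul_le_mul
          · apply mul_le_mul_of_nonneg_left _ (by linarith : (0:ℝ) ≤ r)
            apply Real.rpow_le_rpow (le_max_right _ _) _ (by linarith)
            have : max a 0 ≤ |a| := by
              rcases le_total a 0 with h' | h'
              · simp [max_eq_right h', abs_nonneg]
              · simp [max_eq_left h', le_abs_self]
            have := abs_nonneg b; linarith
          · exact posPart_sub_le a b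
          · have h2 : max b 0 ≤ max a 0 := h
            linarith
          · positivity

lemma pw_sub_abs_le {r : ℝ} (hr : 1 ≤ r) (a b : ℝ) :
    |pw r a - pw r b| ≤ r * (|a| + |b|) ^ (r - 1) * |a - b| := by
  rw [abs_sub_le_iff]
  constructor
  · exact pw_sub_le_one_side hr a b
  · have := pw_sub_le_one_side hr b a
    rwa [abs_sub_comm, add_comm (|b|)] at this

lemma pw_sub_abs_le' {r : ℝ} (hr0 : 0 < r) (hr : r ≤ 1) (a b : ℝ) :
    |pw r a - pw r b| ≤ |a - b| ^ r := by
  have key : ∀ a b : ℝ, pw r a - pw r b ≤ |a - b| ^ r := by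
    intro a b
    rcases le_total (max a 0) (max b 0) with h | h
    · have h1 : pw r a ≤ pw r b := Real.rpow_le_rpow (le_max_right _ _) h hr0.le
      have := Real.rpow_nonneg (abs_nonneg (a - b)) r
      linarith
    · have hd : (0:ℝ) ≤ max a 0 - max b 0 := by linarith
      have hsub : (max b 0 + (max a 0 - max b 0)) ^ r ≤ (max b 0) ^ r + (max a 0 - max b 0) ^ r := by
        have := NNReal.rpow_add_le_add_rpow (Real.toNNReal (max b 0)) (Real.toNNReal (max a 0 - max b 0)) hr0.le hr
        have hb0 : (0:ℝ) ≤ max b 0 := le_max_right _ _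
        have := NNReal.coe_le_coe.2 this
        push_cast [NNReal.coe_rpow, Real.coe_toNNReal _ hb0, Real.coe_toNNReal _ hd,
          Real.coe_toNNReal _ (by positivity : (0:ℝ) ≤ max b 0 + (max a 0 - max b 0))] at this
        convert this using 2 <;> simp [Real.toNNReal, NNReal.coe_rpow]
      rw [add_sub_cancel] at hsub
      have h2 : (max a 0 - max b 0) ^ r ≤ |a - b| ^ r :=
        Real.rpow_le_rpow hd (posPart_sub_le a b) hr0.le
      unfold pw; linarith
  rw [abs_sub_le_iff]
  exact ⟨key a b, by rw [abs_sub_comm]; exact key b a⟩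




lemma hasDerivAt_pw {s : ℝ} (hs : 1 < s) (t : ℝ) :
    HasDerivAt (pw s) (s * pw (s - 1) t) t := by
  rcases lt_trichotomy t 0 with ht | rfl | ht
  · have hev : pw s =ᶠ[𝓝 t] fun _ => 0 := by
      filter_upwards [Iio_mem_nhds ht] with u hu
      have hu' : u < 0 := hu
      simp only [pw, max_eq_right hu'.le, Real.zero_rpow (by linarith : s ≠ 0)]
    have : HasDerivAt (fun _ : ℝ => (0:ℝ)) 0 t := hasDerivAt_const _ _
    have h2 := this.congr_of_eventuallyEq hev
    refine h2.congr_deriv ?_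
    simp [pw, max_eq_right ht.le, Real.zero_rpow (by linarith : s - 1 ≠ 0)]
  · -- t = 0
    rw [hasDerivAt_iff_tendsto_slope]
    have hbound : ∀ h : ℝ, h ≠ 0 → |slope (pw s) 0 h| ≤ |h| ^ (s - 1) := by
      intro h hh
      rw [slope_def_field]
      have h1 : pw s 0 = 0 := by simp [pw, Real.zero_rpow (by linarith : s ≠ 0)]
      rw [h1, sub_zero, sub_zero, div_eq_mul_inv, abs_mul, abs_inv]
      have h2 : pw s h ≤ |h| ^ s := by
        apply Real.rpow_le_rpow (le_max_right _ _) _ (by linarith)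
        rcases le_total h 0 with h' | h'
        · simp [max_eq_right h', abs_nonneg]
        · simp [max_eq_left h', le_abs_self]
      have h3 : |pw s h| = pw s h := abs_of_nonneg (pw_nonneg _ _)
      rw [h3]
      have hha : 0 < |h| := abs_pos.2 hh
      calc pw s h * |h|⁻¹ ≤ |h| ^ s * |h|⁻¹ := by
            exact mul_le_mul_of_nonneg_right h2 (by positivity)
        _ = |h| ^ (s - 1) := by
            rw [← Real.rpow_neg_one |h|, ← Real.rpow_add hha]; ring_nf
      
    have hto : Tendsto (fun h : ℝ => |h| ^ (s - 1)) (𝓝[≠] 0) (𝓝 0) := by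
      have : Tendsto (fun h : ℝ => |h| ^ (s - 1)) (𝓝 0) (𝓝 0) := by
        have hc : Continuous fun h : ℝ => |h| ^ (s - 1) :=
          (Real.continuous_rpow_const (by linarith)).comp continuous_abs
        have := hc.tendsto 0
        simpa [Real.zero_rpow (by linarith : s - 1 ≠ 0)] using this
      exact this.mono_left nhdsWithin_le_nhds
    have : Tendsto (slope (pw s) 0) (𝓝[≠] 0) (𝓝 0) := by
      apply squeeze_zero_norm' _ hto
      filter_upwards [self_mem_nhdsWithin] with h hh
      exact hbound h hh
    convert this using 2
    simp [pw, Real.zero_rpow (by linarith : s - 1 ≠ 0)]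
  · have hev : pw s =ᶠ[𝓝 t] fun u => u ^ s := by
      filter_upwards [Ioi_mem_nhds ht] with u hu
      simp [pw, max_eq_left (le_of_lt (Set.mem_Ioi.mp hu))]
    have h0 : HasDerivAt (fun u : ℝ => u ^ s) (s * t ^ (s - 1)) t := by
      have := Real.hasDerivAt_rpow_const (x := t) (p := s) (Or.inl (ne_of_gt ht))
      simpa [mul_comm] using this
    have h2 := h0.congr_of_eventuallyEq hev
    refine h2.congr_deriv ?_
    simp [pw, max_eq_left ht.le]

lemma contDiff_pw {s : ℝ} (hs : 1 < s) : ContDiff ℝ 1 (pw s) := by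
  rw [contDiff_one_iff_deriv]
  constructor
  · exact fun t => (hasDerivAt_pw hs t).differentiableAt
  · have : deriv (pw s) = fun t => s * pw (s - 1) t := by
      funext t; exact (hasDerivAt_pw hs t).deriv
    rw [this]
    exact continuous_const.mul (continuous_pw _ (by linarith))

variable {X : Type*} [NormedAddCommGroup X] [InnerProductSpace ℝ X] [CompleteSpace X]

lemma gradient_comp_pw {f : X → ℝ} {x : X} (hf : DifferentiableAt ℝ f x) {θ : ℝ → ℝ} {d : ℝ}
    (hθ : HasDerivAt θ d (f x)) : gradient (fun y => θ (f y)) x = d • gradient f x := by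
  have hg : HasGradientAt f (gradient f x) x := hf.hasGradientAt
  have hF : HasFDerivAt f (toDual ℝ X (gradient f x)) x := hg.hasFDerivAt
  have hθ' : HasFDerivAt θ (ContinuousLinearMap.smulRight (1 : ℝ →L[ℝ] ℝ) d) (f x) :=
    hθ.hasFDerivAt
  have hcomp := hθ'.comp x hF
  have heq : (ContinuousLinearMap.smulRight (1 : ℝ →L[ℝ] ℝ) d).comp (toDual ℝ X (gradient f x))
      = toDual ℝ X (d • gradient f x) := by
    ext y
    simp [real_inner_smul_left, mul_comm]
  rw [heq] at hcomp
  have := hcomp.hasGradientAt.gradient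
  simp only [LinearIsometryEquiv.symm_apply_apply] at this
  exact this


lemma exp_identity {p s : ℝ} (hs : 1 < s) (hsp : s < p) :
    1 / ENNReal.ofReal (p / s) = 1 / ENNReal.ofReal (p / (s - 1)) + 1 / ENNReal.ofReal p := by
  have hp0 : 0 < p := by linarith
  have h1 : 0 < p / s := by positivity
  have h2 : 0 < p / (s - 1) := div_pos hp0 (by linarith)
  rw [one_div, one_div, one_div, ← ENNReal.ofReal_inv_of_pos h1, ← ENNReal.ofReal_inv_of_pos h2,
    ← ENNReal.ofReal_inv_of_pos hp0, ← ENNReal.ofReal_add (by positivity) (by positivity)]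
  congr 1
  field_simp
  ring

lemma ofReal_div_mul {p r : ℝ} (hp : 0 < p) (hr : 0 < r) :
    ENNReal.ofReal (p / r) * ENNReal.ofReal r = ENNReal.ofReal p := by
  rw [← ENNReal.ofReal_mul (by positivity), div_mul_cancel₀ _ (ne_of_gt hr)]

variable {X : Type*} [MeasurableSpace X]

lemma eLpNorm_abs_rpow (ν : Measure X) (v : X → ℝ) {p r : ℝ} (hp : 0 < p) (hr : 0 < r) :
    eLpNorm (fun x => |v x| ^ r) (ENNReal.ofReal (p / r)) ν
      = eLpNorm v (ENNReal.ofReal p) ν ^ r := by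
  have := eLpNorm_norm_rpow (p := ENNReal.ofReal (p / r)) (μ := ν) v hr
  rw [ofReal_div_mul hp hr] at this
  simpa [Real.norm_eq_abs] using this

lemma eLpNorm_pw_rpow (ν : Measure X) (v : X → ℝ) {p r : ℝ} (hp : 0 < p) (hr : 0 < r) :
    eLpNorm (fun x => (max (v x) 0) ^ r) (ENNReal.ofReal (p / r)) ν
      = eLpNorm (fun x => max (v x) 0) (ENNReal.ofReal p) ν ^ r := by
  have := eLpNorm_norm_rpow (p := ENNReal.ofReal (p / r)) (μ := ν) (fun x => max (v x) 0) hr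
  rw [ofReal_div_mul hp hr] at this
  rw [show (fun x => (max (v x) 0) ^ r) = fun x => ‖max (v x) 0‖ ^ r by
    funext x; rw [Real.norm_eq_abs, abs_of_nonneg (le_max_right _ _)]]
  exact this



variable {X : Type*} [MeasurableSpace X]

lemma rpow_tendsto_zero {γ : ℕ → ℝ≥0∞} {r : ℝ} (hr : 0 < r)
    (h : Tendsto γ atTop (𝓝 0)) : Tendsto (fun n => γ n ^ r) atTop (𝓝 0) := by
  have := (ENNReal.continuous_rpow_const (y := r)).tendsto 0 |>.comp h
  simpa [Function.comp_def, ENNReal.zero_rpow_of_pos hr] using this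

lemma conv_pw (ν : Measure X) {p r : ℝ} (hp : 1 < p) (hr : 0 < r) (hrp : r < p)
    (fn : ℕ → X → ℝ) (φ : X → ℝ) (hfn : ∀ n, AEStronglyMeasurable (fn n) ν)
    (hφm : AEStronglyMeasurable φ ν) (hφp : eLpNorm φ (ENNReal.ofReal p) ν ≠ ⊤)
    (hconv : Tendsto (fun n => eLpNorm (fun x => fn n x - φ x) (ENNReal.ofReal p) ν)
      atTop (𝓝 0)) :
    Tendsto (fun n => eLpNorm (fun x => pw r (fn n x) - pw r (φ x)) (ENNReal.ofReal (p / r)) ν)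
      atTop (𝓝 0) := by
  set γ : ℕ → ℝ≥0∞ := fun n => eLpNorm (fun x => fn n x - φ x) (ENNReal.ofReal p) ν with hγ
  have hp0 : 0 < p := by linarith
  rcases le_or_gt r 1 with hr1 | hr1
  · -- r ≤ 1
    have hb : ∀ n, eLpNorm (fun x => pw r (fn n x) - pw r (φ x)) (ENNReal.ofReal (p / r)) ν
        ≤ γ n ^ r := by
      intro n
      calc eLpNorm (fun x => pw r (fn n x) - pw r (φ x)) (ENNReal.ofReal (p / r)) ν
          ≤ eLpNorm (fun x => |fn n x - φ x| ^ r) (ENNReal.ofReal (p / r)) ν := by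
            apply eLpNorm_mono_real
            intro x
            rw [Real.norm_eq_abs]
            exact pw_sub_abs_le' hr hr1 _ _
        _ = γ n ^ r := eLpNorm_abs_rpow ν _ hp0 hr
    exact tendsto_of_tendsto_of_tendsto_of_le_of_le tendsto_const_nhds
      (rpow_tendsto_zero hr hconv) (fun n => zero_le) hb
  · -- 1 < r
    have hAESMd : ∀ n, AEStronglyMeasurable (fun x => fn n x - φ x) ν :=
      fun n => (hfn n).sub hφm
    have hAESMh : ∀ n, AEStronglyMeasurable (fun x => |fn n x| + |φ x|) ν := by
      intro n
      exact ((hfn n).norm.add hφm.norm).congr (by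
        filter_upwards with x; simp [Real.norm_eq_abs])
    set B : ℝ≥0∞ := 1 + 2 * eLpNorm φ (ENNReal.ofReal p) ν with hB
    have hBne : B ≠ ⊤ := by
      simp only [hB, Ne, ENNReal.add_eq_top, ENNReal.mul_eq_top]
      push_neg
      refine ⟨by simp, fun _ => hφp, by simp⟩
    set C : ℝ≥0∞ := (‖r‖₊ : ℝ≥0∞) * B ^ (r - 1) with hC
    have hCne : C ≠ ⊤ := by
      apply ENNReal.mul_ne_top (by simp)
      exact ENNReal.rpow_ne_top_of_nonneg (by linarith) hBne
    have hone : (1 : ℝ≥0∞) ≤ ENNReal.ofReal p := by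
      rw [show (1:ℝ≥0∞) = ENNReal.ofReal 1 by simp]
      exact ENNReal.ofReal_le_ofReal hp.le
    have hev : ∀ᶠ n in atTop, γ n ≤ 1 :=
      hconv.eventually_le_const (by norm_num)
    have hbound : ∀ᶠ n in atTop,
        eLpNorm (fun x => pw r (fn n x) - pw r (φ x)) (ENNReal.ofReal (p / r)) ν
          ≤ C * γ n := by
      filter_upwards [hev] with n hn
      have step1 : eLpNorm (fun x => pw r (fn n x) - pw r (φ x)) (ENNReal.ofReal (p / r)) ν
          ≤ eLpNorm ((fun x => r * (|fn n x| + |φ x|) ^ (r - 1)) • (fun x => fn n x - φ x))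
              (ENNReal.ofReal (p / r)) ν := by
        apply eLpNorm_mono
        intro x
        simp only [Pi.smul_apply', smul_eq_mul, Real.norm_eq_abs, abs_mul]
        calc |pw r (fn n x) - pw r (φ x)| ≤ r * (|fn n x| + |φ x|) ^ (r - 1) * |fn n x - φ x| :=
              pw_sub_abs_le hr1.le _ _
          _ = |r| * |(|fn n x| + |φ x|) ^ (r - 1)| * |fn n x - φ x| := by
              rw [abs_of_nonneg (by positivity : (0:ℝ) ≤ (|fn n x| + |φ x|) ^ (r - 1)),
                abs_of_nonneg (by linarith : (0:ℝ) ≤ r)]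
      have step2 : eLpNorm ((fun x => r * (|fn n x| + |φ x|) ^ (r - 1)) •
            (fun x => fn n x - φ x)) (ENNReal.ofReal (p / r)) ν
          ≤ eLpNorm (fun x => r * (|fn n x| + |φ x|) ^ (r - 1)) (ENNReal.ofReal (p / (r - 1))) ν
            * γ n :=
        eLpNorm_smul_le_mul_eLpNorm (hAESMd n)
          (by
            apply AEStronglyMeasurable.const_mul
            exact ((Real.continuous_rpow_const (by linarith : (0:ℝ) ≤ r - 1)).comp_aestronglyMeasurable
              (hAESMh n)))
          (hpqr := ⟨by simpa only [one_div] using (exp_identity hr1 hrp).symm⟩)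
      have step3 : eLpNorm (fun x => r * (|fn n x| + |φ x|) ^ (r - 1))
            (ENNReal.ofReal (p / (r - 1))) ν
          ≤ (‖r‖₊ : ℝ≥0∞) * (eLpNorm (fun x => |fn n x| + |φ x|) (ENNReal.ofReal p) ν) ^ (r - 1) := by
        have e1 : eLpNorm (fun x => r * (|fn n x| + |φ x|) ^ (r - 1))
              (ENNReal.ofReal (p / (r - 1))) ν
            = (‖r‖₊ : ℝ≥0∞) * eLpNorm (fun x => (|fn n x| + |φ x|) ^ (r - 1))
              (ENNReal.ofReal (p / (r - 1))) ν := by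
          rw [show (fun x => r * (|fn n x| + |φ x|) ^ (r - 1))
              = r • fun x => (|fn n x| + |φ x|) ^ (r - 1) by rfl]
          rw [eLpNorm_const_smul]
          rfl
        rw [e1]
        apply mul_le_mul_right _ _
        have e2 : eLpNorm (fun x => (|fn n x| + |φ x|) ^ (r - 1)) (ENNReal.ofReal (p / (r - 1))) ν
            = eLpNorm (fun x => |fn n x| + |φ x|) (ENNReal.ofReal p) ν ^ (r - 1) := by
          have := eLpNorm_abs_rpow ν (fun x => |fn n x| + |φ x|) hp0 (by linarith : (0:ℝ) < r - 1)
          rw [show (fun x => |(|fn n x| + |φ x|)| ^ (r - 1)) = fun x => (|fn n x| + |φ x|) ^ (r - 1)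
            by funext x; rw [abs_of_nonneg (by positivity)]] at this
          exact this
        rw [e2]
      have step4 : eLpNorm (fun x => |fn n x| + |φ x|) (ENNReal.ofReal p) ν ≤ B := by
        calc eLpNorm (fun x => |fn n x| + |φ x|) (ENNReal.ofReal p) ν
            ≤ eLpNorm (fun x => |fn n x|) (ENNReal.ofReal p) ν
              + eLpNorm (fun x => |φ x|) (ENNReal.ofReal p) ν := by
              exact eLpNorm_add_le ((hfn n).norm.congr (by filter_upwards with x; simp [Real.norm_eq_abs]))
                (hφm.norm.congr (by filter_upwards with x; simp [Real.norm_eq_abs])) hone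
          _ = eLpNorm (fn n) (ENNReal.ofReal p) ν + eLpNorm φ (ENNReal.ofReal p) ν := by
              rw [show (fun x => |fn n x|) = fun x => ‖fn n x‖ by funext x; simp [Real.norm_eq_abs],
                show (fun x => |φ x|) = fun x => ‖φ x‖ by funext x; simp [Real.norm_eq_abs],
                eLpNorm_norm, eLpNorm_norm]
          _ ≤ (γ n + eLpNorm φ (ENNReal.ofReal p) ν) + eLpNorm φ (ENNReal.ofReal p) ν := by
              gcongr
              calc eLpNorm (fn n) (ENNReal.ofReal p) ν
                  = eLpNorm (fun x => (fn n x - φ x) + φ x) (ENNReal.ofReal p) ν := by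
                    congr 1; funext x; ring
                _ ≤ γ n + eLpNorm φ (ENNReal.ofReal p) ν :=
                    eLpNorm_add_le (hAESMd n) hφm hone
          _ ≤ B := by
              rw [hB, two_mul]
              calc γ n + eLpNorm φ (ENNReal.ofReal p) ν + eLpNorm φ (ENNReal.ofReal p) ν
                  ≤ 1 + eLpNorm φ (ENNReal.ofReal p) ν + eLpNorm φ (ENNReal.ofReal p) ν := by
                    gcongr
                _ = 1 + (eLpNorm φ (ENNReal.ofReal p) ν + eLpNorm φ (ENNReal.ofReal p) ν) := by
                    rw [add_assoc]
      calc eLpNorm (fun x => pw r (fn n x) - pw r (φ x)) (ENNReal.ofReal (p / r)) ν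
          ≤ eLpNorm (fun x => r * (|fn n x| + |φ x|) ^ (r - 1)) (ENNReal.ofReal (p / (r - 1))) ν
            * γ n := step1.trans step2
        _ ≤ ((‖r‖₊ : ℝ≥0∞) * (eLpNorm (fun x => |fn n x| + |φ x|) (ENNReal.ofReal p) ν) ^ (r - 1)) * γ n := by
            gcongr
        _ ≤ C * γ n :=
            mul_le_mul_left
              (mul_le_mul_right (ENNReal.rpow_le_rpow step4 (by linarith)) _) _
    have hCγ : Tendsto (fun n => C * γ n) atTop (𝓝 0) := by
      have := ENNReal.Tendsto.const_mul hconv (Or.inr hCne)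
      simpa using this
    exact tendsto_of_tendsto_of_tendsto_of_le_of_le' tendsto_const_nhds hCγ
      (Eventually.of_forall fun n => zero_le) hbound

end aux

section star

/-- One-sided Hölder + Minkowski bound valid for a possibly non-measurable function `W`. -/
lemma star_bound {X : Type*} [MeasurableSpace X] (ν : Measure X)
    {Y Z : Type*} [NormedAddCommGroup Y] [NormedAddCommGroup Z]
    {t u w : ℝ} (ht : 1 ≤ t) (hu : 1 < u) (hw : 1 < w) (htu : t < u) (htw : t < w)
    (hconj : 1 / t = 1 / u + 1 / w)
    (F : X → Y) (W : X → Z) (c g : X → ℝ≥0∞)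
    (hc : Measurable c) (hcf : ∀ x, c x ≠ ⊤) (hg : AEMeasurable g ν)
    (hpt : ∀ x, (‖F x‖₊ : ℝ≥0∞) ≤ c x * (‖W x‖₊ : ℝ≥0∞) + g x) :
    eLpNorm F (ENNReal.ofReal t) ν
      ≤ (∫⁻ x, c x ^ u ∂ν) ^ (1 / u) * eLpNorm W (ENNReal.ofReal w) ν
        + (∫⁻ x, g x ^ t ∂ν) ^ (1 / t) := by
  have ht0 : 0 < t := by linarith
  have hu0 : 0 < u := by linarith
  have hw0 : 0 < w := by linarith
  set A : ℝ≥0∞ := (∫⁻ x, c x ^ u ∂ν) ^ (1 / u) with hA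
  set S : ℝ≥0∞ := eLpNorm W (ENNReal.ofReal w) ν with hSdef
  set B : ℝ≥0∞ := (∫⁻ x, g x ^ t ∂ν) ^ (1 / t) with hBdef
  have hS : S = (∫⁻ x, (‖W x‖₊ : ℝ≥0∞) ^ w ∂ν) ^ (1 / w) := by
    rw [hSdef, eLpNorm_eq_lintegral_rpow_enorm_toReal (by simp [hw0] : ENNReal.ofReal w ≠ 0)
      ENNReal.ofReal_ne_top, ENNReal.toReal_ofReal hw0.le]
    rfl
  rw [eLpNorm_eq_lintegral_rpow_enorm_toReal (by simp [ht0] : ENNReal.ofReal t ≠ 0)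
    ENNReal.ofReal_ne_top, ENNReal.toReal_ofReal ht0.le]
  set M : ℝ≥0∞ := A * S + B with hM
  suffices hsuf : ∫⁻ x, (‖F x‖₊ : ℝ≥0∞) ^ t ∂ν ≤ M ^ t by
    calc (∫⁻ x, (‖F x‖₊ : ℝ≥0∞) ^ t ∂ν) ^ (1 / t) ≤ (M ^ t) ^ (1 / t) :=
          ENNReal.rpow_le_rpow hsuf (by positivity)
      _ = M := by rw [← ENNReal.rpow_mul, mul_one_div, div_self ht0.ne', ENNReal.rpow_one]
  rw [MeasureTheory.lintegral_def]
  refine iSup_le fun ψ => iSup_le fun hψ => ?_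
  -- measurable modification of g
  set g₀ : X → ℝ≥0∞ := hg.mk g with hg₀def
  have hg₀m : Measurable g₀ := hg.measurable_mk
  have hgg₀ : g =ᵐ[ν] g₀ := hg.ae_eq_mk
  have hB₀ : (∫⁻ x, g₀ x ^ t ∂ν) ^ (1 / t) = B := by
    rw [hBdef]
    congr 1
    refine lintegral_congr_ae (hgg₀.mono fun x hx => ?_)
    show g₀ x ^ t = g x ^ t
    rw [hx]
  set φf : X → ℝ≥0∞ := fun x => ψ x ^ (1 / t) with hφf
  have hφm : Measurable φf := by
    exact (ENNReal.continuous_rpow_const.measurable).comp ψ.measurable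
  have hφcancel : ∀ x, φf x ^ t = ψ x := by
    intro x
    rw [hφf, ← ENNReal.rpow_mul, one_div, inv_mul_cancel₀ ht0.ne', ENNReal.rpow_one]
  have hφ_le : ∀ x, φf x ≤ c x * (‖W x‖₊ : ℝ≥0∞) + g x := by
    intro x
    calc φf x ≤ ((‖F x‖₊ : ℝ≥0∞) ^ t) ^ (1 / t) := ENNReal.rpow_le_rpow (hψ x) (by positivity)
      _ = (‖F x‖₊ : ℝ≥0∞) := by
          rw [← ENNReal.rpow_mul, mul_one_div, div_self ht0.ne', ENNReal.rpow_one]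
      _ ≤ c x * (‖W x‖₊ : ℝ≥0∞) + g x := hpt x
  set h : X → ℝ≥0∞ := fun x => if c x = 0 then 0 else (φf x - g₀ x) / c x with hhdef
  have hhm : Measurable h := by
    refine Measurable.ite (hc (measurableSet_singleton 0)) measurable_const ?_
    exact (hφm.sub hg₀m).div hc
  have claim1 : ∀ᵐ x ∂ν, h x ≤ (‖W x‖₊ : ℝ≥0∞) := by
    filter_upwards [hgg₀] with x hx
    by_cases hc0 : c x = 0
    · simp [hhdef, hc0]
    · rw [hhdef]
      simp only [if_neg hc0]
      rw [ENNReal.div_le_iff hc0 (hcf x)]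
      rw [tsub_le_iff_right]
      calc φf x ≤ c x * (‖W x‖₊ : ℝ≥0∞) + g x := hφ_le x
        _ = (‖W x‖₊ : ℝ≥0∞) * c x + g₀ x := by rw [hx, mul_comm]
  have claim2 : ∀ᵐ x ∂ν, φf x ≤ c x * h x + g₀ x := by
    filter_upwards [hgg₀] with x hx
    by_cases hc0 : c x = 0
    · have := hφ_le x
      rw [hc0, zero_mul, zero_add, hx] at this
      simpa [hhdef, hc0] using this
    · rw [hhdef]
      simp only [if_neg hc0]
      rw [ENNReal.mul_div_cancel' (fun h => absurd h hc0) (fun h => absurd h (hcf x))]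
      exact le_tsub_add
  -- main chain
  have main : ∫⁻ x, ψ x ∂ν ≤ M ^ t := by
    have step1 : ∫⁻ x, ψ x ∂ν ≤ ∫⁻ x, (c x * h x + g₀ x) ^ t ∂ν := by
      refine lintegral_mono_ae ?_
      filter_upwards [claim2] with x hx
      rw [← hφcancel x]
      exact ENNReal.rpow_le_rpow hx ht0.le
    have step2 : (∫⁻ x, (c x * h x + g₀ x) ^ t ∂ν) ^ (1 / t)
        ≤ (∫⁻ x, (c x * h x) ^ t ∂ν) ^ (1 / t) + (∫⁻ x, g₀ x ^ t ∂ν) ^ (1 / t) := by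
      exact ENNReal.lintegral_Lp_add_le ((hc.mul hhm).aemeasurable) hg₀m.aemeasurable ht
    have step3 : (∫⁻ x, (c x * h x) ^ t ∂ν) ^ (1 / t) ≤ A * S := by
      have hconj' : (u / t).HolderConjugate (w / t) := by
        constructor
        · rw [inv_div, inv_div, inv_one, div_eq_mul_one_div t u, div_eq_mul_one_div t w, ← mul_add,
            ← hconj, mul_one_div_cancel ht0.ne']
        · positivity
        · positivity
      have hold : ∫⁻ x, (c x * h x) ^ t ∂ν
          ≤ (∫⁻ x, c x ^ u ∂ν) ^ (t / u) * (∫⁻ x, h x ^ w ∂ν) ^ (t / w) := by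
        have := ENNReal.lintegral_mul_le_Lp_mul_Lq ν hconj'
          (f := fun x => c x ^ t) (g := fun x => h x ^ t)
          ((ENNReal.continuous_rpow_const.measurable).comp hc).aemeasurable
          ((ENNReal.continuous_rpow_const.measurable).comp hhm).aemeasurable
        calc ∫⁻ x, (c x * h x) ^ t ∂ν = ∫⁻ x, ((fun x => c x ^ t) * fun x => h x ^ t) x ∂ν := by
              refine lintegral_congr fun x => ?_
              simp [ENNReal.mul_rpow_of_nonneg _ _ ht0.le]
          _ ≤ (∫⁻ x, (c x ^ t) ^ (u / t) ∂ν) ^ (1 / (u / t))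
              * (∫⁻ x, (h x ^ t) ^ (w / t) ∂ν) ^ (1 / (w / t)) := this
          _ = (∫⁻ x, c x ^ u ∂ν) ^ (t / u) * (∫⁻ x, h x ^ w ∂ν) ^ (t / w) := by
              rw [one_div_div, one_div_div]
              congr 2
              · refine lintegral_congr fun x => ?_
                rw [← ENNReal.rpow_mul, mul_div_cancel₀ _ ht0.ne']
              · refine lintegral_congr fun x => ?_
                rw [← ENNReal.rpow_mul, mul_div_cancel₀ _ ht0.ne']
      have hWmono : ∫⁻ x, h x ^ w ∂ν ≤ ∫⁻ x, (‖W x‖₊ : ℝ≥0∞) ^ w ∂ν := by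
        refine lintegral_mono_ae ?_
        filter_upwards [claim1] with x hx
        exact ENNReal.rpow_le_rpow hx hw0.le
      calc (∫⁻ x, (c x * h x) ^ t ∂ν) ^ (1 / t)
          ≤ ((∫⁻ x, c x ^ u ∂ν) ^ (t / u) * (∫⁻ x, h x ^ w ∂ν) ^ (t / w)) ^ (1 / t) :=
            ENNReal.rpow_le_rpow hold (by positivity)
        _ = (∫⁻ x, c x ^ u ∂ν) ^ (1 / u) * (∫⁻ x, h x ^ w ∂ν) ^ (1 / w) := by
            rw [ENNReal.mul_rpow_of_nonneg _ _ (by positivity : (0:ℝ) ≤ 1 / t),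
              ← ENNReal.rpow_mul, ← ENNReal.rpow_mul]
            congr 2 <;> field_simp <;> ring
        _ ≤ A * S := by
            rw [hA, hS]
            exact mul_le_mul_right (ENNReal.rpow_le_rpow hWmono (by positivity)) _
    have : (∫⁻ x, (c x * h x + g₀ x) ^ t ∂ν) ^ (1 / t) ≤ M := by
      rw [hM, ← hB₀]
      exact step2.trans (add_le_add step3 le_rfl)
    calc ∫⁻ x, ψ x ∂ν ≤ ∫⁻ x, (c x * h x + g₀ x) ^ t ∂ν := step1
      _ = ((∫⁻ x, (c x * h x + g₀ x) ^ t ∂ν) ^ (1 / t)) ^ t := by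
          rw [← ENNReal.rpow_mul, one_div, inv_mul_cancel₀ ht0.ne', ENNReal.rpow_one]
      _ ≤ M ^ t := ENNReal.rpow_le_rpow this ht0.le
  calc ψ.lintegral ν = ∫⁻ x, ψ x ∂ν := (SimpleFunc.lintegral_eq_lintegral ψ ν).symm
    _ ≤ M ^ t := main

end star


variable {X : Type*} [NormedAddCommGroup X] [InnerProductSpace ℝ X] [CompleteSpace X]
  [MeasurableSpace X] [BorelSpace X]

/-- `f ∈ C¹_b(X)`: bounded, continuously Fréchet differentiable, with bounded gradient. -/
def C1b (f : X → ℝ) : Prop :=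
  ContDiff ℝ 1 f ∧ (∃ C, ∀ x, |f x| ≤ C) ∧ (∃ C, ∀ x, ‖gradient f x‖ ≤ C)

/-- `f ∈ W^{1,p}(X,ν)` with `M_p f = G`, where `M_p` is the closure of `R∇` defined on
`C¹_b(X)`. -/
def IsSobolevPair (R : X →L[ℝ] X) (ν : Measure X) (p : ℝ≥0∞)
    (f : X → ℝ) (G : X → X) : Prop :=
  MemLp f p ν ∧ MemLp G p ν ∧
    ∃ fn : ℕ → X → ℝ, (∀ n, C1b (fn n)) ∧
      Tendsto (fun n => eLpNorm (fun x => fn n x - f x) p ν) atTop (𝓝 0) ∧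
      Tendsto (fun n => eLpNorm (fun x => R (gradient (fn n) x) - G x) p ν) atTop (𝓝 0)

/-- If `φ ∈ W^{1,p}(X,ν)`, `φ ≥ 0` ν-a.e. and `1 < s < p`, then `φ^s ∈ W^{1,p/s}(X,ν)` with
`‖φ^s‖_{W^{1,p/s}} ≤ ‖φ‖_{L^p}^s + s ‖M_pφ‖_{L^p} ‖φ‖_{L^p}^{s-1}`. -/
theorem stmt19 (R : X →L[ℝ] X) (ν : Measure X) [IsProbabilityMeasure ν]
    (p s : ℝ) (hp : 1 < p) (hs : 1 < s) (hsp : s < p)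
    (hclos : ∀ G : X → X,
      IsSobolevPair R ν (ENNReal.ofReal p) (fun _ => 0) G → G =ᵐ[ν] fun _ => 0)
    (φ : X → ℝ) (G : X → X) (hφ : IsSobolevPair R ν (ENNReal.ofReal p) φ G)
    (hpos : ∀ᵐ x ∂ν, 0 ≤ φ x) :
    ∃ G' : X → X,
      IsSobolevPair R ν (ENNReal.ofReal (p / s)) (fun x => φ x ^ s) G' ∧
      (eLpNorm (fun x => φ x ^ s) (ENNReal.ofReal (p / s)) ν).toReal +
          (eLpNorm G' (ENNReal.ofReal (p / s)) ν).toReal ≤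
        (eLpNorm φ (ENNReal.ofReal p) ν).toReal ^ s +
          s * (eLpNorm G (ENNReal.ofReal p) ν).toReal *
            (eLpNorm φ (ENNReal.ofReal p) ν).toReal ^ (s - 1) := by
  obtain ⟨hφLp, hGLp, fn, hC1bn, hc1, hc2⟩ := hφ
  have hp0 : (0:ℝ) < p := by linarith
  have hs0 : (0:ℝ) < s := by linarith
  have hs1 : (0:ℝ) < s - 1 := by linarith
  have hs1p : s - 1 < p := by linarith
  have hφm : AEStronglyMeasurable φ ν := hφLp.1
  have hGm : AEStronglyMeasurable G ν := hGLp.1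
  have hφfin : eLpNorm φ (ENNReal.ofReal p) ν ≠ ⊤ := hφLp.eLpNorm_ne_top
  have hGfin : eLpNorm G (ENNReal.ofReal p) ν ≠ ⊤ := hGLp.eLpNorm_ne_top
  have hfnm : ∀ n, AEStronglyMeasurable (fn n) ν :=
    fun n => ((hC1bn n).1.continuous).aestronglyMeasurable
  have hq1 : (1:ℝ≥0∞) ≤ ENNReal.ofReal (p / s) := by
    rw [show (1:ℝ≥0∞) = ENNReal.ofReal 1 by simp]
    exact ENNReal.ofReal_le_ofReal ((one_le_div hs0).2 hsp.le)
  -- a.e. rewriting facts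
  have hplus : (fun x => max (φ x) 0) =ᵐ[ν] φ := by
    filter_upwards [hpos] with x hx; simp [max_eq_left hx]
  have hpw_eq : (fun x => pw s (φ x)) =ᵐ[ν] (fun x => φ x ^ s) := by
    filter_upwards [hpos] with x hx
    simp [pw, max_eq_left hx]
  -- norm identity for φ^s
  have hA : eLpNorm (fun x => φ x ^ s) (ENNReal.ofReal (p / s)) ν
      = eLpNorm φ (ENNReal.ofReal p) ν ^ s := by
    rw [← eLpNorm_congr_ae hpw_eq]
    rw [show (fun x => pw s (φ x)) = fun x => (max (φ x) 0) ^ s from rfl,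
      eLpNorm_pw_rpow ν φ hp0 hs0, eLpNorm_congr_ae hplus]
  -- the candidate gradient
  set G' : X → X := fun x => (s * pw (s - 1) (φ x)) • G x with hG'def
  have hcont_coef : Continuous fun t : ℝ => s * pw (s - 1) t :=
    continuous_const.mul (continuous_pw _ hs1.le)
  have hcoefm : AEStronglyMeasurable (fun x => s * pw (s - 1) (φ x)) ν :=
    hcont_coef.comp_aestronglyMeasurable hφm
  have hG'm : AEStronglyMeasurable G' ν := hcoefm.smul hGm
  -- Hölder helper
  have hHold : ∀ (c : X → ℝ) (F : X → X), AEStronglyMeasurable c ν → AEStronglyMeasurable F ν →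
      eLpNorm (fun x => c x • F x) (ENNReal.ofReal (p / s)) ν
        ≤ eLpNorm c (ENNReal.ofReal (p / (s - 1))) ν * eLpNorm F (ENNReal.ofReal p) ν :=
    fun c F hc hF => eLpNorm_smul_le_mul_eLpNorm hF hc (hpqr := ⟨by simpa only [one_div] using (exp_identity hs hsp).symm⟩)
  -- norm of coefficient functions
  have hcoefnorm : ∀ u : X → ℝ,
      eLpNorm (fun x => s * pw (s - 1) (u x)) (ENNReal.ofReal (p / (s - 1))) ν
        = (‖s‖₊ : ℝ≥0∞) * eLpNorm (fun x => max (u x) 0) (ENNReal.ofReal p) ν ^ (s - 1) := by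
    intro u
    rw [show (fun x => s * pw (s - 1) (u x)) = s • fun x => pw (s - 1) (u x) from rfl,
      eLpNorm_const_smul]
    congr 1
    exact eLpNorm_pw_rpow ν u hp0 hs1
  -- bound for eLpNorm G'
  have hB : eLpNorm G' (ENNReal.ofReal (p / s)) ν
      ≤ (‖s‖₊ : ℝ≥0∞) * eLpNorm φ (ENNReal.ofReal p) ν ^ (s - 1)
        * eLpNorm G (ENNReal.ofReal p) ν := by
    refine le_trans (hHold _ _ hcoefm hGm) ?_
    rw [hcoefnorm φ, eLpNorm_congr_ae hplus]
  have hBfin : (‖s‖₊ : ℝ≥0∞) * eLpNorm φ (ENNReal.ofReal p) ν ^ (s - 1)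
      * eLpNorm G (ENNReal.ofReal p) ν ≠ ⊤ := by
    apply ENNReal.mul_ne_top (ENNReal.mul_ne_top (by simp)
      (ENNReal.rpow_ne_top_of_nonneg hs1.le hφfin)) hGfin
  -- Memℒp facts
  have hMemA : MemLp (fun x => φ x ^ s) (ENNReal.ofReal (p / s)) ν := by
    refine ⟨(Real.continuous_rpow_const hs0.le).comp_aestronglyMeasurable hφm, ?_⟩
    rw [hA]
    exact (ENNReal.rpow_ne_top_of_nonneg hs0.le hφfin).lt_top
  have hMemG' : MemLp G' (ENNReal.ofReal (p / s)) ν :=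
    ⟨hG'm, lt_of_le_of_lt hB hBfin.lt_top⟩
  -- the approximating sequence
  set gn : ℕ → X → ℝ := fun n x => pw s (fn n x) with hgndef
  have hfndiff : ∀ n x, DifferentiableAt ℝ (fn n) x :=
    fun n x => ((hC1bn n).1.differentiable one_ne_zero) x
  have hgrad : ∀ n x, gradient (gn n) x = (s * pw (s - 1) (fn n x)) • gradient (fn n) x :=
    fun n x => gradient_comp_pw (hfndiff n x) (hasDerivAt_pw hs _)
  have hgnC1b : ∀ n, C1b (gn n) := by
    intro n
    obtain ⟨hcd, ⟨C, hC⟩, ⟨D, hD⟩⟩ := hC1bn n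
    have hC0 : 0 ≤ C := le_trans (abs_nonneg _) (hC 0)
    have hD0 : 0 ≤ D := le_trans (norm_nonneg _) (hD 0)
    refine ⟨(contDiff_pw hs).comp hcd, ⟨C ^ s, fun x => ?_⟩, ⟨s * C ^ (s - 1) * D, fun x => ?_⟩⟩
    · rw [show |gn n x| = pw s (fn n x) from abs_of_nonneg (pw_nonneg _ _)]
      exact pw_le hs0.le (hC x)
    · rw [hgrad n x, norm_smul, Real.norm_eq_abs,
        abs_of_nonneg (mul_nonneg hs0.le (pw_nonneg _ _))]
      have h1 : pw (s - 1) (fn n x) ≤ C ^ (s - 1) := pw_le hs1.le (hC x)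
      have h2 : ‖gradient (fn n) x‖ ≤ D := hD x
      have h3 := pw_nonneg (s - 1) (fn n x)
      have h4 : (0:ℝ) ≤ C ^ (s - 1) := Real.rpow_nonneg hC0 _
      calc s * pw (s - 1) (fn n x) * ‖gradient (fn n) x‖
          ≤ s * C ^ (s - 1) * ‖gradient (fn n) x‖ := by
            apply mul_le_mul_of_nonneg_right _ (norm_nonneg _)
            exact mul_le_mul_of_nonneg_left h1 hs0.le
        _ ≤ s * C ^ (s - 1) * D := by
            apply mul_le_mul_of_nonneg_left h2 (by positivity)
  -- convergence of gn to φ^s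
  have hconvA : Tendsto (fun n => eLpNorm (fun x => gn n x - φ x ^ s)
      (ENNReal.ofReal (p / s)) ν) atTop (𝓝 0) := by
    have h := conv_pw ν hp hs0 hsp fn φ hfnm hφm hφfin hc1
    refine h.congr fun n => eLpNorm_congr_ae ?_
    filter_upwards [hpos] with x hx
    have h1 : pw s (φ x) = φ x ^ s := by simp [pw, max_eq_left hx]
    show pw s (fn n x) - pw s (φ x) = gn n x - φ x ^ s
    rw [h1]
  -- convergence of gradients
  have hcoefnm : ∀ n, AEStronglyMeasurable (fun x => s * pw (s - 1) (fn n x)) ν :=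
    fun n => hcont_coef.comp_aestronglyMeasurable (hfnm n)
  have hdiffm : ∀ n, AEStronglyMeasurable
      (fun x => s * (pw (s - 1) (fn n x) - pw (s - 1) (φ x))) ν := by
    intro n
    apply AEStronglyMeasurable.const_mul
    exact ((continuous_pw _ hs1.le).comp_aestronglyMeasurable (hfnm n)).sub
      ((continuous_pw _ hs1.le).comp_aestronglyMeasurable hφm)
  have hid : ∀ (v : X → ℝ) (a : ℝ), 0 < a →
      (∫⁻ x, ((‖v x‖₊ : ℝ≥0∞)) ^ a ∂ν) ^ (1/a) = eLpNorm v (ENNReal.ofReal a) ν := by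
    intro v a ha
    rw [eLpNorm_eq_lintegral_rpow_enorm_toReal (by simp [ha] : ENNReal.ofReal a ≠ 0)
      ENNReal.ofReal_ne_top, ENNReal.toReal_ofReal ha.le]
    rfl
  have hidX : ∀ (v : X → X) (a : ℝ), 0 < a →
      (∫⁻ x, ((‖v x‖₊ : ℝ≥0∞)) ^ a ∂ν) ^ (1/a) = eLpNorm v (ENNReal.ofReal a) ν := by
    intro v a ha
    rw [eLpNorm_eq_lintegral_rpow_enorm_toReal (by simp [ha] : ENNReal.ofReal a ≠ 0)
      ENNReal.ofReal_ne_top, ENNReal.toReal_ofReal ha.le]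
    rfl
  have hc2' : Tendsto (fun n => eLpNorm (fun x => R (gradient (gn n) x) - G' x)
      (ENNReal.ofReal (p / s)) ν) atTop (𝓝 0) := by
    set γ : ℕ → ℝ≥0∞ := fun n => eLpNorm (fun x => fn n x - φ x) (ENNReal.ofReal p) ν with hγdef
    set δ : ℕ → ℝ≥0∞ :=
      fun n => eLpNorm (fun x => R (gradient (fn n) x) - G x) (ENNReal.ofReal p) ν with hδdef
    set ε : ℕ → ℝ≥0∞ := fun n => eLpNorm (fun x => pw (s - 1) (fn n x) - pw (s - 1) (φ x))
      (ENNReal.ofReal (p / (s - 1))) ν with hεdef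
    have hε : Tendsto ε atTop (𝓝 0) := conv_pw ν hp hs1 hs1p fn φ hfnm hφm hφfin hc1
    have hγev : ∀ᶠ n in atTop, γ n ≤ 1 := hc1.eventually_le_const (by norm_num)
    set C1 : ℝ≥0∞ := (‖s‖₊ : ℝ≥0∞) * (1 + eLpNorm φ (ENNReal.ofReal p) ν) ^ (s - 1) with hC1def
    have hC1fin : C1 ≠ ⊤ :=
      ENNReal.mul_ne_top (by simp) (ENNReal.rpow_ne_top_of_nonneg hs1.le (by
        simp [ENNReal.add_eq_top, hφfin]))
    -- star bound for each n
    have hstar : ∀ n, eLpNorm (fun x => R (gradient (gn n) x) - G' x)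
        (ENNReal.ofReal (p / s)) ν
        ≤ eLpNorm (fun x => s * pw (s - 1) (fn n x)) (ENNReal.ofReal (p / (s - 1))) ν * δ n
          + eLpNorm (fun x => (s * (pw (s - 1) (fn n x) - pw (s - 1) (φ x))) • G x)
            (ENNReal.ofReal (p / s)) ν := by
      intro n
      have hconj : 1 / (p / s) = 1 / (p / (s - 1)) + 1 / p := by
        rw [one_div_div, one_div_div]
        field_simp
        ring
      have hcm : Measurable (fun x => ((‖s * pw (s - 1) (fn n x)‖₊ : ℝ≥0) : ℝ≥0∞)) := by
        apply Measurable.coe_nnreal_ennreal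
        exact ((hcont_coef.comp (hC1bn n).1.continuous).nnnorm).measurable
      have hgm : AEMeasurable
          (fun x => ((‖(s * (pw (s - 1) (fn n x) - pw (s - 1) (φ x))) • G x‖₊ : ℝ≥0) : ℝ≥0∞)) ν :=
        ((hdiffm n).smul hGm).enorm
      have hpt : ∀ x, (‖R (gradient (gn n) x) - G' x‖₊ : ℝ≥0∞)
          ≤ (‖s * pw (s - 1) (fn n x)‖₊ : ℝ≥0∞) * (‖R (gradient (fn n) x) - G x‖₊ : ℝ≥0∞)
            + (‖(s * (pw (s - 1) (fn n x) - pw (s - 1) (φ x))) • G x‖₊ : ℝ≥0∞) := by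
        intro x
        have hxeq : R (gradient (gn n) x) - G' x
            = (s * pw (s - 1) (fn n x)) • (R (gradient (fn n) x) - G x)
              + (s * (pw (s - 1) (fn n x) - pw (s - 1) (φ x))) • G x := by
          rw [hgrad n x, R.map_smul]
          simp only [hG'def, smul_sub, sub_smul, mul_sub]
          abel
        rw [hxeq]
        calc ((‖(s * pw (s - 1) (fn n x)) • (R (gradient (fn n) x) - G x)
              + (s * (pw (s - 1) (fn n x) - pw (s - 1) (φ x))) • G x‖₊ : ℝ≥0) : ℝ≥0∞)
            ≤ (‖(s * pw (s - 1) (fn n x)) • (R (gradient (fn n) x) - G x)‖₊ : ℝ≥0∞)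
              + (‖(s * (pw (s - 1) (fn n x) - pw (s - 1) (φ x))) • G x‖₊ : ℝ≥0∞) := by
              exact_mod_cast nnnorm_add_le _ _
          _ = (‖s * pw (s - 1) (fn n x)‖₊ : ℝ≥0∞) * (‖R (gradient (fn n) x) - G x‖₊ : ℝ≥0∞)
              + (‖(s * (pw (s - 1) (fn n x) - pw (s - 1) (φ x))) • G x‖₊ : ℝ≥0∞) := by
              rw [nnnorm_smul]
              push_cast
              ring
      have := star_bound (t := p / s) (u := p / (s - 1)) (w := p) ν
        ((one_le_div hs0).2 hsp.le) ((one_lt_div hs1).2 (by linarith)) hp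
        ((div_lt_div_iff_of_pos_left hp0 hs0 hs1).2 (by linarith)) ((div_lt_self hp0 hs).trans_le le_rfl)
        hconj
        (fun x => R (gradient (gn n) x) - G' x)
        (fun x => R (gradient (fn n) x) - G x)
        _ _ hcm (fun x => ENNReal.coe_ne_top) hgm hpt
      refine this.trans ?_
      rw [hid (fun x => s * pw (s - 1) (fn n x)) (p / (s - 1)) (by positivity),
        hidX (fun x => (s * (pw (s - 1) (fn n x) - pw (s - 1) (φ x))) • G x) (p / s) (by positivity)]
    have hbound : ∀ᶠ n in atTop,
        eLpNorm (fun x => R (gradient (gn n) x) - G' x) (ENNReal.ofReal (p / s)) ν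
          ≤ C1 * δ n + (‖s‖₊ : ℝ≥0∞) * ε n * eLpNorm G (ENNReal.ofReal p) ν := by
      filter_upwards [hγev] with n hn
      refine (hstar n).trans (add_le_add ?_ ?_)
      · -- coefficient bound
        apply mul_le_mul_left
        rw [hcoefnorm (fn n)]
        apply mul_le_mul_right
        apply ENNReal.rpow_le_rpow _ hs1.le
        calc eLpNorm (fun x => max (fn n x) 0) (ENNReal.ofReal p) ν
            ≤ eLpNorm (fn n) (ENNReal.ofReal p) ν := by
              apply eLpNorm_mono
              intro x
              rw [Real.norm_eq_abs, Real.norm_eq_abs, abs_of_nonneg (le_max_right _ _)]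
              rcases le_total (fn n x) 0 with h' | h'
              · simp [max_eq_right h', abs_nonneg]
              · simp [max_eq_left h', le_abs_self]
          _ = eLpNorm (fun x => (fn n x - φ x) + φ x) (ENNReal.ofReal p) ν := by
              congr 1; funext x; ring
          _ ≤ γ n + eLpNorm φ (ENNReal.ofReal p) ν := by
              refine eLpNorm_add_le ((hfnm n).sub hφm) hφm ?_
              rw [show (1:ℝ≥0∞) = ENNReal.ofReal 1 by simp]
              exact ENNReal.ofReal_le_ofReal hp.le
          _ ≤ 1 + eLpNorm φ (ENNReal.ofReal p) ν := by gcongr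
      · -- difference term bound via Hölder
        refine le_trans (hHold _ _ (hdiffm n) hGm) ?_
        apply mul_le_mul_left
        rw [show (fun x => s * (pw (s - 1) (fn n x) - pw (s - 1) (φ x)))
            = s • fun x => pw (s - 1) (fn n x) - pw (s - 1) (φ x) from rfl,
          eLpNorm_const_smul]
        exact le_rfl
    have hlim : Tendsto (fun n => C1 * δ n + (‖s‖₊ : ℝ≥0∞) * ε n
        * eLpNorm G (ENNReal.ofReal p) ν) atTop (𝓝 0) := by
      have h1 : Tendsto (fun n => C1 * δ n) atTop (𝓝 0) := by
        have := ENNReal.Tendsto.const_mul hc2 (Or.inr hC1fin)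
        simpa using this
      have h2 : Tendsto (fun n => (‖s‖₊ : ℝ≥0∞) * ε n * eLpNorm G (ENNReal.ofReal p) ν)
          atTop (𝓝 0) := by
        have ha : Tendsto (fun n => (‖s‖₊ : ℝ≥0∞) * ε n) atTop (𝓝 0) := by
          have := ENNReal.Tendsto.const_mul hε (Or.inr (ENNReal.coe_ne_top (r := ‖s‖₊)))
          simpa using this
        have := ENNReal.Tendsto.mul_const ha (Or.inr hGfin)
        simpa using this
      have := h1.add h2
      simpa using this
    exact tendsto_of_tendsto_of_tendsto_of_le_of_le' tendsto_const_nhds hlim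
      (Eventually.of_forall fun n => zero_le) hbound
  refine ⟨G', ⟨hMemA, hMemG', gn, hgnC1b, hconvA, hc2'⟩, ?_⟩
  -- the quantitative bound
  have e1 : (eLpNorm (fun x => φ x ^ s) (ENNReal.ofReal (p / s)) ν).toReal
      = (eLpNorm φ (ENNReal.ofReal p) ν).toReal ^ s := by
    rw [hA, ← ENNReal.toReal_rpow]
  have e2 : (eLpNorm G' (ENNReal.ofReal (p / s)) ν).toReal
      ≤ s * (eLpNorm G (ENNReal.ofReal p) ν).toReal
        * (eLpNorm φ (ENNReal.ofReal p) ν).toReal ^ (s - 1) := by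
    have h := ENNReal.toReal_mono hBfin hB
    rw [ENNReal.toReal_mul, ENNReal.toReal_mul, ← ENNReal.toReal_rpow] at h
    have hns : ((‖s‖₊ : ℝ≥0∞)).toReal = s := by
      simp [Real.norm_eq_abs, abs_of_pos hs0]
    rw [hns] at h
    calc (eLpNorm G' (ENNReal.ofReal (p / s)) ν).toReal
        ≤ s * (eLpNorm φ (ENNReal.ofReal p) ν).toReal ^ (s - 1)
          * (eLpNorm G (ENNReal.ofReal p) ν).toReal := h
      _ = s * (eLpNorm G (ENNReal.ofReal p) ν).toReal
          * (eLpNorm φ (ENNReal.ofReal p) ν).toReal ^ (s - 1) := by ring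
  rw [e1]
  linarith [e2]
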